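/- Let 𝒲 be the universal Coxeter group of rank n, the free product of n copies of ℤ/2ℤ with generators t_1,…,t_n. An element of 𝒲 represented by a reduced word i_1 i_2 ⋯ i_k is a reflection (conjugate of some generator) if and only if k is odd and i_j = i_{k+1−j} for all j = 1,…,k (i.e. the reduced word is a palindrome of odd length). -/

import Mathlib

/-- The universal Coxeter group of rank `n`: the group presented by generators
`t_1, …, t_n` and relations `t_i² = 1` (the free product of `n` copies of ℤ/2ℤ). -/
def UnivCoxeter (n : ℕ) : Type :=
  PresentedGroup (Set.range fun i : Fin n => (FreeGroup.of i) ^ 2)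

instance (n : ℕ) : Group (UnivCoxeter n) := by
  unfold UnivCoxeter; infer_instance

/-- The generator `t_i` of the universal Coxeter group. -/
def tgen {n : ℕ} (i : Fin n) : UnivCoxeter n :=
  PresentedGroup.of i

/-- An element of the universal Coxeter group is a reflection if it is a
conjugate of some generator. -/
def IsReflection {n : ℕ} (x : UnivCoxeter n) : Prop :=
  ∃ (w : UnivCoxeter n) (i : Fin n), x = w * tgen i * w⁻¹

namespace UCAux

variable {n : ℕ}

lemma tgen_sq (i : Fin n) : tgen i * tgen i = 1 := by
  have h1 : ((FreeGroup.of i) ^ 2 : FreeGroup (Fin n)) ∈ Subgroup.normalClosure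
      (Set.range fun i : Fin n => (FreeGroup.of i) ^ 2) :=
    Subgroup.subset_normalClosure ⟨i, rfl⟩
  have h2 : (QuotientGroup.mk ((FreeGroup.of i) ^ 2) : UnivCoxeter n) = 1 :=
    (QuotientGroup.eq_one_iff _).mpr h1
  have h3 : (QuotientGroup.mk ((FreeGroup.of i) ^ 2) : UnivCoxeter n)
      = tgen i * tgen i := by
    rw [pow_two]
    rfl
  rw [← h3, h2]
  rfl

lemma tgen_inv (i : Fin n) : (tgen i)⁻¹ = tgen i :=
  inv_eq_of_mul_eq_one_right (tgen_sq i)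

lemma prod_reverse (u : List (Fin n)) :
    ((u.reverse.map tgen).prod) = ((u.map tgen).prod)⁻¹ := by
  induction u with
  | nil => simp
  | cons a u ih =>
    rw [List.reverse_cons, List.map_append, List.prod_append, ih]
    simp [tgen_inv, mul_inv_rev]

/-- Normal forms: words with no two equal consecutive letters. -/
def NF (n : ℕ) : Type := {l : List (Fin n) // l.Chain' (· ≠ ·)}

/-- Prepend a letter, cancelling if necessary. -/
def preFun (i : Fin n) (l : NF n) : NF n :=
  if h : l.1.head? = some i then ⟨l.1.tail, l.2.tail⟩
  else ⟨i :: l.1, List.isChain_cons.mpr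
    ⟨fun y hy hiy => h (by simpa [← hiy] using hy), l.2⟩⟩

lemma preFun_invol (i : Fin n) : Function.Involutive (preFun i) := by
  intro l
  obtain ⟨l, hl⟩ := l
  cases l with
  | nil => simp [preFun]; rfl
  | cons a t =>
    by_cases hai : a = i
    · subst hai
      have h1 : preFun a ⟨a :: t, hl⟩ = ⟨t, hl.tail⟩ := by
        simp [preFun]; rfl
      rw [h1]
      have h2 : t.head? ≠ some a := by
        intro h
        have := (List.isChain_cons.mp hl).1 a h
        exact this rfl
      simp [preFun, h2]; rfl
    · apply Subtype.ext
      simp [preFun, hai]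

def eperm (i : Fin n) : Equiv.Perm (NF n) := (preFun_invol i).toPerm

lemma eperm_sq (i : Fin n) : (eperm i) * (eperm i) = 1 := by
  ext x
  exact preFun_invol i x

/-- The action of the universal Coxeter group on normal forms. -/
def phi : UnivCoxeter n →* Equiv.Perm (NF n) :=
  PresentedGroup.toGroup (f := fun i => eperm i) (by
    rintro r ⟨i, rfl⟩
    simp only [map_pow]
    rw [pow_two, FreeGroup.lift_apply_of, eperm_sq])

lemma phi_tgen (i : Fin n) : phi (tgen i) = eperm i :=
  PresentedGroup.toGroup.of _

def nilNF : NF n := ⟨[], List.isChain_nil⟩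

/-- The quotient map as a hom into `UnivCoxeter n`. -/
def mkUC : FreeGroup (Fin n) →* UnivCoxeter n :=
  PresentedGroup.mk (Set.range fun i : Fin n => (FreeGroup.of i) ^ 2)

lemma mkUC_surj : Function.Surjective (mkUC (n := n)) :=
  PresentedGroup.mk_surjective _

lemma mkUC_pure (x : Fin n) : mkUC (FreeGroup.of x) = tgen x := rfl

lemma phi_spec' (z : FreeGroup (Fin n)) (l : NF n) :
    (((phi (mkUC z) l).1.map tgen).prod) = mkUC z * ((l.1.map tgen).prod) := by
  induction z using FreeGroup.induction_on generalizing l with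
  | C1 =>
    rw [map_one]
    simp
  | of x =>
    rw [mkUC_pure, phi_tgen]
    show (((preFun x l).1.map tgen).prod) = tgen x * ((l.1.map tgen).prod)
    by_cases h : l.1.head? = some x
    · obtain ⟨lv, hl⟩ := l
      cases lv with
      | nil => simp at h
      | cons a t =>
        simp only [List.head?_cons, Option.some.injEq] at h
        subst h
        simp only [preFun]
        simp only [List.head?_cons, dif_pos rfl]
        simp [← mul_assoc, tgen_sq]
    · rw [show preFun x l = ⟨x :: l.1, _⟩ from dif_neg h]
      simp
  | inv_of x ih =>
    rw [map_inv, mkUC_pure, tgen_inv]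
    rw [mkUC_pure] at ih
    exact ih l
  | mul a b iha ihb =>
    rw [map_mul]
    have : ((phi (mkUC a) * phi (mkUC b)) l) = phi (mkUC a) (phi (mkUC b) l) := rfl
    rw [map_mul, this, iha, ihb, mul_assoc]

lemma phi_spec (w : UnivCoxeter n) (l : NF n) :
    (((phi w l).1.map tgen).prod) = w * ((l.1.map tgen).prod) := by
  obtain ⟨z, rfl⟩ := mkUC_surj w
  exact phi_spec' z l

lemma phi_of_chain' (l : List (Fin n)) (hl : l.Chain' (· ≠ ·)) :
    phi ((l.map tgen).prod) nilNF = ⟨l, hl⟩ := by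
  induction l with
  | nil => simp [nilNF]; rfl
  | cons i t ih =>
    have ht : t.Chain' (· ≠ ·) := hl.tail
    have : ((i :: t).map tgen).prod = tgen i * ((t.map tgen).prod) := by simp
    rw [this, map_mul]
    show phi (tgen i) (phi ((t.map tgen).prod) nilNF) = _
    rw [ih ht, phi_tgen]
    show preFun i ⟨t, ht⟩ = _
    have h : t.head? ≠ some i := by
      intro h
      exact (List.isChain_cons.mp hl).1 i h rfl
    simp [preFun, h]; rfl

lemma pal (u : List (Fin n)) (i : Fin n) :
    ∃ m : List (Fin n), m.Chain' (· ≠ ·) ∧ Odd m.length ∧ m.reverse = m ∧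
      (m.map tgen).prod = (u.map tgen).prod * tgen i * ((u.map tgen).prod)⁻¹ := by
  induction u with
  | nil => exact ⟨[i], List.isChain_singleton _, by simp, rfl, by simp⟩
  | cons j u ih =>
    obtain ⟨m, hc, hodd, hpal, hprod⟩ := ih
    have key : ((j :: u).map tgen).prod * tgen i * (((j :: u).map tgen).prod)⁻¹
        = tgen j * (m.map tgen).prod * tgen j := by
      simp only [List.map_cons, List.prod_cons, mul_inv_rev, tgen_inv, hprod]
      group
    by_cases hh : m.head? = some j
    · cases m with
      | nil => simp at hh
      | cons a r =>
        simp only [List.head?_cons, Option.some.injEq] at hh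
        subst hh
        rcases r.eq_nil_or_concat with rfl | ⟨mid, b, hrb⟩
        · refine ⟨[a], List.isChain_singleton _, by simp, rfl, ?_⟩
          rw [key]
          simp [← mul_assoc, tgen_sq]
        · rw [List.concat_eq_append] at hrb
          subst hrb
          have h' : b :: (mid.reverse ++ [a]) = a :: (mid ++ [b]) := by
            have h := hpal
            simpa [List.reverse_cons, List.reverse_append] using h
          simp only [List.cons.injEq] at h'
          obtain ⟨hba, htl⟩ := h'
          subst hba
          have hmid : mid.reverse = mid := by
            have h2 := congrArg List.dropLast htl
            simpa using h2
          refine ⟨mid, ?_, ?_, hmid, ?_⟩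
          · exact (List.isChain_append.mp hc.tail).1
          · obtain ⟨t, ht⟩ := hodd
            refine ⟨t - 1, ?_⟩
            simp only [List.length_cons, List.length_append, List.length_singleton, List.length_nil] at ht
            omega
          · rw [key]
            have hsplit : ((b :: (mid ++ [b])).map tgen).prod
                = tgen b * (mid.map tgen).prod * tgen b := by
              simp [mul_assoc]
            rw [hsplit,
              show tgen b * (tgen b * (mid.map tgen).prod * tgen b) * tgen b
                = (tgen b * tgen b) * (mid.map tgen).prod * (tgen b * tgen b) by group,
              tgen_sq]
            simp
    · have hm_ne : m ≠ [] := by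
        rintro rfl
        simp at hodd
      have hlast : m.getLast? ≠ some j := by
        rw [← List.head?_reverse, hpal]
        exact hh
      refine ⟨j :: (m ++ [j]), ?_, ?_, ?_, ?_⟩
      · refine List.isChain_cons.mpr ?_
        constructor
        · intro y hy hjy
          rw [List.head?_append_of_ne_nil _ hm_ne] at hy
          exact hh (by rw [← hjy] at hy; exact hy)
        · rw [List.isChain_append]
          refine ⟨hc, by simp, ?_⟩
          intro x hx y hy
          simp only [List.head?_cons, Option.mem_def, Option.some.injEq] at hy
          subst hy
          intro hxy
          rw [Option.mem_def] at hx
          exact hlast (by rw [hx, hxy])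
      · obtain ⟨t, ht⟩ := hodd
        refine ⟨t + 1, ?_⟩
        simp only [List.length_cons, List.length_append, List.length_singleton, List.length_nil] at ht ⊢
        omega
      · simp [hpal]
      · rw [key]
        simp [mul_assoc]

end UCAux

open UCAux in
/-- an element of the universal Coxeter group of rank `n`
represented by a reduced word `i_1 i_2 ⋯ i_k` (no two equal consecutive letters)
is a reflection if and only if `k` is odd and `i_j = i_{k+1−j}` for all `j`,
i.e. the reduced word is a palindrome of odd length. -/
theorem stmt12 {n : ℕ} (l : List (Fin n)) (hred : l.Chain' (· ≠ ·)) :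
    IsReflection ((l.map tgen).prod) ↔ Odd l.length ∧ l.reverse = l := by
  constructor
  · rintro ⟨w, i, hx⟩
    set u : NF n := phi w nilNF with hu
    have hw : ((u.1.map tgen).prod) = w := by
      have := phi_spec w nilNF
      rw [← hu] at this
      simpa [nilNF] using this
    obtain ⟨m, hc, hodd, hpal, hprod⟩ := pal u.1 i
    have hml : (l.map tgen).prod = (m.map tgen).prod := by
      rw [hx, hprod, hw]
    have := phi_of_chain' l hred
    rw [hml, phi_of_chain' m hc] at this
    have hlm : m = l := congrArg Subtype.val this
    subst hlm
    exact ⟨hodd, hpal⟩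
  · rintro ⟨⟨k, hk⟩, hpal⟩
    have hkl : k < l.length := by omega
    have hdecomp : l = l.take k ++ l.get ⟨k, hkl⟩ :: (l.take k).reverse := by
      have h1 : l.take (k + 1) = l.take k ++ [l.get ⟨k, hkl⟩] := by
        rw [List.take_succ]
        simp [List.getElem?_eq_getElem hkl]
      have h2 : l.drop (k + 1) = (l.take k).reverse := by
        conv_lhs => rw [← hpal]
        rw [List.drop_reverse, show l.length - (k + 1) = k from by omega]
      conv_lhs => rw [← List.take_append_drop (k + 1) l]
      rw [h1, h2, List.append_assoc, List.singleton_append]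
    refine ⟨((l.take k).map tgen).prod, l.get ⟨k, hkl⟩, ?_⟩
    conv_lhs => rw [hdecomp]
    rw [← prod_reverse]
    simp [mul_assoc]
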